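/- Let S and T be strings with |S| ≥ 1 and 2·|S| − 1 ≤ |T|. Then S is a seed of T if and only if S is a seed of every substring of T of length 2·|S| − 1, i.e., of T[i, i+2|S|−2] for every i with 1 ≤ i ≤ |T| − 2|S| + 2. -/

import Mathlib

/-!
STATEMENT 11: Let `S` and `T` be strings with `|S| ≥ 1` and
`2·|S| − 1 ≤ |T|`.  Then `S` is a seed of `T` if and only if `S` is a seed of
every substring of `T` of length `2·|S| − 1`, i.e. of `T[i, i+2|S|−2]` for
every valid starting position `i`.
Strings are modelled as lists; positions are 0-based, and the substring of
length `2|S|−1` starting at (0-based) position `i` is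
`(T.drop i).take (2·|S| − 1)`.
-/

variable {α : Type*}

/-- `i` is a (0-based) starting position of an occurrence of `C` in `T`. -/
def IsOcc (T C : List α) (i : ℕ) : Prop :=
  i + C.length ≤ T.length ∧ (T.drop i).take C.length = C

/-- Position `p` (0-based) of `T` lies within an occurrence of `C` in `T`. -/
def CoveredPos (T C : List α) (p : ℕ) : Prop :=
  ∃ i, IsOcc T C i ∧ i ≤ p ∧ p < i + C.length

/-- `C` is a cover of `T`: `C` fits into `T` and every position of `T`
lies within an occurrence of `C`. -/
def IsCover (C T : List α) : Prop :=
  C.length ≤ T.length ∧ ∀ p, p < T.length → CoveredPos T C p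

/-- `S` is a seed of `T`: `|S| ≤ |T|` and `S` is a cover of some string
containing `T` as a substring. -/
def IsSeed (S T : List α) : Prop :=
  S.length ≤ T.length ∧ ∃ U : List α, T <:+: U ∧ IsCover S U

lemma occ_of_prefix {P U S : List α} {i : ℕ} (h : P <+: U) (ho : IsOcc P S i) :
    IsOcc U S i := by
  obtain ⟨Q, rfl⟩ := h
  obtain ⟨h1, h2⟩ := ho
  refine ⟨by simpa using le_trans h1 (by simp), ?_⟩
  rw [List.drop_append_of_le_length (by omega), List.take_append_of_le_length (by simp; omega), h2]

lemma occ_restrict_prefix {P U S : List α} {i : ℕ} (h : P <+: U) (ho : IsOcc U S i)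
    (hl : i + S.length ≤ P.length) : IsOcc P S i := by
  obtain ⟨Q, rfl⟩ := h
  obtain ⟨h1, h2⟩ := ho
  refine ⟨hl, ?_⟩
  rwa [List.drop_append_of_le_length (by omega), List.take_append_of_le_length (by simp; omega)] at h2

lemma occ_append_left {Q S : List α} (P : List α) {i : ℕ} (ho : IsOcc Q S i) :
    IsOcc (P ++ Q) S (P.length + i) := by
  obtain ⟨h1, h2⟩ := ho
  exact ⟨by simp; omega, by rwa [List.drop_length_add_append]⟩

lemma occ_restrict_suffix {P Q S : List α} {i : ℕ} (ho : IsOcc (P ++ Q) S i)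
    (hl : P.length ≤ i) : IsOcc Q S (i - P.length) := by
  obtain ⟨h1, h2⟩ := ho
  refine ⟨by simp at h1; omega, ?_⟩
  have : i = P.length + (i - P.length) := by omega
  rwa [this, List.drop_length_add_append] at h2

lemma seed_infix_mono {S T W : List α} (hs : IsSeed S T) (hi : W <:+: T)
    (hl : S.length ≤ W.length) : IsSeed S W := by
  obtain ⟨_, U, hTU, hc⟩ := hs
  exact ⟨hl, U, hi.trans hTU, hc⟩

lemma window_occ {S W : List α} (hm : 1 ≤ S.length) (hW : W.length = 2 * S.length - 1)
    (hs : IsSeed S W) : ∃ s, s ≤ S.length - 1 ∧ IsOcc W S s := by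
  obtain ⟨_, U, ⟨A, B, rfl⟩, hUl, hc⟩ := hs
  set m := S.length
  have hpos : A.length + m - 1 < (A ++ W ++ B).length := by simp [hW]; omega
  obtain ⟨i, hio, hi1, hi2⟩ := hc _ hpos
  have hA : A.length ≤ i := by omega
  refine ⟨i - A.length, by omega, ?_⟩
  have h1 : IsOcc (W ++ B) S (i - A.length) :=
    occ_restrict_suffix (by rwa [← List.append_assoc]) hA
  exact occ_restrict_prefix ⟨B, rfl⟩ h1 (by simp only [hW]; omega)

lemma occ_window {T S : List α} {j s w : ℕ} (hm : 1 ≤ S.length)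
    (h : IsOcc ((T.drop j).take w) S s) (hsw : s + S.length ≤ w) : IsOcc T S (j + s) := by
  obtain ⟨h1, h2⟩ := h
  simp only [List.length_take, List.length_drop] at h1
  refine ⟨by omega, ?_⟩
  rwa [List.drop_take, List.drop_drop, List.take_take, min_eq_left (by omega)] at h2

theorem seed_iff_seed_of_all_windows (S T : List α)
    (hS : 1 ≤ S.length) (hT : 2 * S.length - 1 ≤ T.length) :
    IsSeed S T ↔
      ∀ i, i + (2 * S.length - 1) ≤ T.length →
        IsSeed S ((T.drop i).take (2 * S.length - 1)) := by
  set m := S.length with hm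
  set n := T.length with hn
  set w := 2 * m - 1 with hw
  constructor
  · intro hseed i hi
    refine seed_infix_mono hseed ?_ ?_
    · exact ((List.take_prefix w (T.drop i)).isInfix).trans (List.drop_suffix i T).isInfix
    · simp only [List.length_take, List.length_drop]; omega
  · intro h
    have hw0 := h 0 (by omega)
    have hwl := h (n - w) (by omega)
    obtain ⟨_, U1, ⟨A1, B1, hU1⟩, hU1l, hU1c⟩ := hw0
    obtain ⟨_, U2, ⟨A2, B2, hU2⟩, hU2l, hU2c⟩ := hwl
    set W0 : List α := (T.drop 0).take w with hW0
    set Wl : List α := (T.drop (n - w)).take w with hWl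
    have hW0len : W0.length = w := by simp [hW0]; omega
    have hWllen : Wl.length = w := by simp [hWl]; omega
    have hWldrop : Wl = T.drop (n - w) := by
      rw [hWl]; exact List.take_of_length_le (by simp; omega)
    have hW0pre : A1 ++ W0 <+: A1 ++ T ++ B2 := by
      refine ⟨T.drop w ++ B2, ?_⟩
      have : W0 ++ T.drop w = T := by
        rw [hW0, List.drop_zero]; exact List.take_append_drop w T
      rw [List.append_assoc, List.append_assoc, ← List.append_assoc W0, this]
    have hTsplit : T = T.take (n - w) ++ Wl := by
      rw [hWldrop, List.take_append_drop]
    have hUeq : A1 ++ T ++ B2 = (A1 ++ T.take (n - w)) ++ (Wl ++ B2) := by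
      conv_lhs => rw [hTsplit]
      simp [List.append_assoc]
    refine ⟨by omega, A1 ++ T ++ B2, ⟨A1, B2, rfl⟩, ⟨by simp; omega, ?_⟩⟩
    intro p hp
    simp only [List.length_append] at hp
    rcases lt_or_ge (p + 1) (A1.length + m) with hpa | hpa
    · -- covered via first window's cover
      have hU1len : U1.length = A1.length + w + B1.length := by
        rw [← hU1]; simp [hW0len]; ring
      obtain ⟨i, hio, hi1, hi2⟩ := hU1c p (by omega)
      have him : i + m ≤ (A1 ++ W0).length := by simp [hW0len]; omega
      have hocc : IsOcc (A1 ++ W0) S i :=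
        occ_restrict_prefix ⟨B1, hU1⟩ hio him
      exact ⟨i, occ_of_prefix hW0pre hocc, hi1, hi2⟩
    · rcases le_or_gt p (A1.length + (n - m)) with hpb | hpc
      · -- covered via an occurrence inside T
        set j := p - A1.length - (m - 1) with hj
        have hjw : j + w ≤ n := by omega
        obtain ⟨s, hs, hocc⟩ := window_occ hS (by simp; omega) (h j hjw)
        have hTocc : IsOcc T S (j + s) := occ_window hS hocc (by omega)
        refine ⟨A1.length + (j + s), ?_, by omega, ?_⟩
        · exact occ_of_prefix ⟨B2, rfl⟩ (occ_append_left A1 hTocc)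
        · omega
      · -- covered via last window's cover
        have hU2len : U2.length = A2.length + w + B2.length := by
          rw [← hU2]; simp [hWllen]; ring
        set p' := p - (A1.length + (n - w)) + A2.length with hp'
        obtain ⟨i', hoi, h1, h2⟩ := hU2c p' (by omega)
        have hA2 : A2.length ≤ i' := by omega
        have hocc : IsOcc (Wl ++ B2) S (i' - A2.length) :=
          occ_restrict_suffix (show IsOcc (A2 ++ (Wl ++ B2)) S i' by rwa [← List.append_assoc, hU2]) hA2
        have hocc2 : IsOcc (A1 ++ T ++ B2) S
            ((A1 ++ T.take (n - w)).length + (i' - A2.length)) := by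
          rw [hUeq]; exact occ_append_left _ hocc
        refine ⟨_, hocc2, ?_, ?_⟩ <;> simp only [List.length_append, List.length_take] <;> omega
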